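/- For a connected graph Γ with n ≥ 2 vertices, the following are equivalent: (i) the second largest distance eigenvalue δ_1 < 1 - √3; (ii) δ_1 = -1; (iii) Γ is the complete graph K_n; (iv) the distance spectral radius δ_0 = n - 1. -/

import Mathlib

open SimpleGraph Matrix Finset

/-- The distance matrix of a graph, with real entries. -/
noncomputable def distMatrix {V : Type*} [Fintype V] (G : SimpleGraph V) : Matrix V V ℝ :=
  Matrix.of fun x y => (G.dist x y : ℝ)

lemma distMatrix_isHermitian {V : Type*} [Fintype V] (G : SimpleGraph V) :
    (distMatrix G).IsHermitian := by
  ext x y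
  simp [distMatrix, Matrix.conjTranspose_apply, SimpleGraph.dist_comm]

/-- The multiset of eigenvalues (with multiplicity) of the distance matrix of `G`. -/
noncomputable def distSpec {V : Type*} [Fintype V] [DecidableEq V] (G : SimpleGraph V) :
    Multiset ℝ :=
  Finset.univ.val.map (distMatrix_isHermitian G).eigenvalues

section Helpers

set_option linter.unusedSectionVars false

variable {V : Type*} [Fintype V] [DecidableEq V]

lemma star_eq_transpose' (U : Matrix V V ℝ) : star U = Uᵀ := by
  ext i j; simp [conjTranspose_apply]

lemma rayleigh_repr {A : Matrix V V ℝ} (hA : A.IsHermitian) (x : V → ℝ) :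
    x ⬝ᵥ A *ᵥ x = ∑ i, hA.eigenvalues i *
      (((hA.eigenvectorUnitary : Matrix V V ℝ)ᵀ *ᵥ x) i)^2 := by
  set U := (hA.eigenvectorUnitary : Matrix V V ℝ) with hU
  have hst : star U = Uᵀ := star_eq_transpose' U
  have hspec := hA.spectral_theorem
  simp only [Unitary.conjStarAlgAut_apply, Unitary.coe_star] at hspec
  rw [hst] at hspec
  conv_lhs => rw [hspec]
  rw [← mulVec_mulVec, ← mulVec_mulVec, dotProduct_mulVec, ← mulVec_transpose]
  have hdiag : diagonal (RCLike.ofReal ∘ hA.eigenvalues) = diagonal hA.eigenvalues := by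
    congr 1
  rw [hdiag]
  simp only [dotProduct, mulVec_diagonal]
  exact Finset.sum_congr rfl fun i _ => by ring

lemma norm_repr {A : Matrix V V ℝ} (hA : A.IsHermitian) (x : V → ℝ) :
    ∑ i, (((hA.eigenvectorUnitary : Matrix V V ℝ)ᵀ *ᵥ x) i)^2 = ∑ i, (x i)^2 := by
  set U := (hA.eigenvectorUnitary : Matrix V V ℝ) with hU
  have hst : star U = Uᵀ := star_eq_transpose' U
  have hUU : U * Uᵀ = 1 := by
    rw [← hst]; exact (Matrix.mem_unitaryGroup_iff).mp hA.eigenvectorUnitary.2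
  have key : (Uᵀ *ᵥ x) ⬝ᵥ (Uᵀ *ᵥ x) = x ⬝ᵥ x := by
    rw [dotProduct_mulVec, ← mulVec_transpose, transpose_transpose, mulVec_mulVec, hUU,
      one_mulVec]
  simpa [dotProduct, pow_two] using key

lemma sum_eigenvalues_eq_trace {A : Matrix V V ℝ} (hA : A.IsHermitian) :
    ∑ i, hA.eigenvalues i = A.trace := by
  conv_rhs => rw [hA.spectral_theorem, Unitary.conjStarAlgAut_apply]
  rw [Matrix.trace_mul_cycle]
  have h1 : star (hA.eigenvectorUnitary : Matrix V V ℝ) * hA.eigenvectorUnitary = 1 :=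
    (Matrix.mem_unitaryGroup_iff').mp hA.eigenvectorUnitary.2
  rw [h1, Matrix.one_mul, Matrix.trace_diagonal]
  simp

lemma rev_sorted (s : Multiset ℝ) : ((s.sort (· ≤ ·)).reverse).Pairwise (fun a b => b ≤ a) := by
  rw [List.pairwise_reverse]
  exact Multiset.pairwise_sort s _

lemma le_getD_zero {r : List ℝ} (hr : r.Pairwise (fun a b => b ≤ a)) {a : ℝ} (ha : a ∈ r) :
    a ≤ r.getD 0 0 := by
  cases r with
  | nil => simp at ha
  | cons h t =>
    rcases List.mem_cons.mp ha with rfl | ha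
    · simp
    · simpa using (List.pairwise_cons.mp hr).1 a ha

lemma le_getD_one {r : List ℝ} (hr : r.Pairwise (fun a b => b ≤ a)) {c : ℝ}
    (h2 : 2 ≤ r.countP (fun x => decide (c ≤ x))) : c ≤ r.getD 1 0 := by
  match r with
  | [] => simp [List.countP, List.countP.go] at h2
  | [a] =>
    have := List.countP_le_length (l := [a]) (p := fun x => decide (c ≤ x))
    simp only [List.length_singleton] at this
    omega
  | a :: b :: t =>
    show c ≤ b
    by_contra hcb
    push_neg at hcb
    have hb : ∀ x ∈ b :: t, x < c := by
      intro x hx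
      rcases List.mem_cons.mp hx with rfl | hx
      · exact hcb
      · exact lt_of_le_of_lt ((List.pairwise_cons.mp (List.pairwise_cons.mp hr).2).1 x hx) hcb
    have h0 : (b :: t).countP (fun x => decide (c ≤ x)) = 0 := by
      rw [List.countP_eq_zero]
      intro x hx
      simpa using not_le.mpr (hb x hx)
    rw [List.countP_cons, h0] at h2
    split at h2 <;> omega

lemma distMatrix_top_apply (x y : V) :
    distMatrix (⊤ : SimpleGraph V) x y = if x = y then 0 else 1 := by
  by_cases h : x = y
  · simp [distMatrix, h]
  · have : (⊤ : SimpleGraph V).dist x y = 1 :=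
      SimpleGraph.dist_eq_one_iff_adj.mpr (by simpa using h)
    simp [distMatrix, h, this]

lemma trace_distMatrix (G : SimpleGraph V) : (distMatrix G).trace = 0 := by
  simp [Matrix.trace, Matrix.diag, distMatrix, SimpleGraph.dist_self]

lemma eigenvalues_top (i : V) :
    (distMatrix_isHermitian (⊤ : SimpleGraph V)).eigenvalues i = -1 ∨
    (distMatrix_isHermitian (⊤ : SimpleGraph V)).eigenvalues i = (Fintype.card V : ℝ) - 1 := by
  set hA := distMatrix_isHermitian (⊤ : SimpleGraph V)
  set μ := hA.eigenvalues i with hμ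
  by_cases hne : μ = -1
  · exact Or.inl hne
  right
  set v : V → ℝ := ⇑(hA.eigenvectorBasis i) with hv
  have hmv : distMatrix (⊤ : SimpleGraph V) *ᵥ v = μ • v := hA.mulVec_eigenvectorBasis i
  have hS : ∀ j, (distMatrix (⊤ : SimpleGraph V) *ᵥ v) j = (∑ k, v k) - v j := by
    intro j
    show ∑ k, distMatrix (⊤ : SimpleGraph V) j k * v k = _
    calc ∑ k, distMatrix (⊤ : SimpleGraph V) j k * v k
        = ∑ k, (v k - if k = j then v k else 0) := by
          refine Finset.sum_congr rfl fun k _ => ?_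
          rw [distMatrix_top_apply]
          by_cases h : j = k
          · simp [h, eq_comm]
          · rw [if_neg h, if_neg (fun hh : k = j => h hh.symm), one_mul, sub_zero]
      _ = (∑ k, v k) - v j := by
          rw [Finset.sum_sub_distrib, Finset.sum_ite_eq' univ j v, if_pos (mem_univ j)]
  have hkey : ∀ j, (μ + 1) * v j = ∑ k, v k := by
    intro j
    have h1 : (∑ k, v k) - v j = μ * v j := by
      rw [← hS j, hmv]; simp
    linarith
  have hvne : ∃ j, v j ≠ 0 := by
    by_contra hall
    push_neg at hall
    have : (hA.eigenvectorBasis i) = 0 := by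
      ext j; exact hall j
    exact hA.eigenvectorBasis.orthonormal.ne_zero i this
  obtain ⟨j0, hj0⟩ := hvne
  have hconst : ∀ j, v j = v j0 := by
    intro j
    have h1 := hkey j
    have h2 := hkey j0
    have hne' : μ + 1 ≠ 0 := fun h => hne (by linarith)
    exact mul_left_cancel₀ hne' (h1.trans h2.symm)
  have hsum : ∑ k, v k = (Fintype.card V : ℝ) * v j0 := by
    rw [Finset.sum_congr rfl fun k _ => hconst k]
    simp [mul_comm]
  have hfin := hkey j0
  rw [hsum] at hfin
  have hne' : μ + 1 ≠ 0 := fun h => hne (by linarith)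
  have : μ + 1 = (Fintype.card V : ℝ) := mul_right_cancel₀ hj0 hfin
  linarith

lemma distSpec_top (hn : 2 ≤ Fintype.card V) :
    distSpec (⊤ : SimpleGraph V) =
      ((Fintype.card V : ℝ) - 1) ::ₘ Multiset.replicate (Fintype.card V - 1) (-1) := by
  classical
  set n := Fintype.card V with hncard
  set hA := distMatrix_isHermitian (⊤ : SimpleGraph V)
  set ev := hA.eigenvalues with hev
  have hdich : ∀ i, ev i = -1 ∨ ev i = (n : ℝ) - 1 := eigenvalues_top
  have hne2 : ((n : ℝ) - 1) ≠ -1 := by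
    have : (2 : ℝ) ≤ n := by exact_mod_cast hn
    intro h; linarith
  have htr : ∑ i, ev i = 0 := by
    rw [sum_eigenvalues_eq_trace hA, trace_distMatrix]
  set T := univ.filter (fun i => ev i = (n : ℝ) - 1) with hT
  have hTcard : T.card = 1 := by
    have hsplit : ∑ i, ev i
        = ∑ i ∈ T, ev i + ∑ i ∈ univ.filter (fun i => ¬ ev i = (n : ℝ) - 1), ev i :=
      (Finset.sum_filter_add_sum_filter_not univ _ ev).symm
    have h1 : ∑ i ∈ T, ev i = (T.card : ℝ) * ((n : ℝ) - 1) := by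
      rw [Finset.sum_congr rfl (fun i hi => (Finset.mem_filter.mp hi).2)]
      rw [Finset.sum_const, nsmul_eq_mul]
    have h2 : ∑ i ∈ univ.filter (fun i => ¬ ev i = (n : ℝ) - 1), ev i
        = ((univ.filter (fun i => ¬ ev i = (n : ℝ) - 1)).card : ℝ) * (-1) := by
      have hall : ∀ i ∈ univ.filter (fun i => ¬ ev i = (n : ℝ) - 1), ev i = -1 := by
        intro i hi
        rcases hdich i with h | h
        · exact h
        · exact absurd h (Finset.mem_filter.mp hi).2
      rw [Finset.sum_congr rfl hall]
      simp [mul_comm]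
    have hcards : T.card + (univ.filter (fun i => ¬ ev i = (n : ℝ) - 1)).card = n := by
      rw [hT]; rw [Finset.card_filter_add_card_filter_not]; rfl
    have hn0 : (n : ℝ) ≠ 0 := by
      have : 0 < n := by omega
      exact_mod_cast this.ne'
    have hmr : ((univ.filter (fun i => ¬ ev i = (n : ℝ) - 1)).card : ℝ)
        = (n : ℝ) - T.card := by
      have h := hcards
      have : ((T.card : ℝ)) + ((univ.filter (fun i => ¬ ev i = (n : ℝ) - 1)).card : ℝ)
          = (n : ℝ) := by exact_mod_cast congrArg (Nat.cast : ℕ → ℝ) h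
      linarith
    rw [hsplit, h1, h2, hmr] at htr
    have : (T.card : ℝ) = 1 := by
      have hnn : (T.card : ℝ) * (n : ℝ) = 1 * (n : ℝ) := by ring_nf; ring_nf at htr; linarith
      exact mul_right_cancel₀ hn0 hnn
    exact_mod_cast this
  refine Multiset.ext.mpr fun b => ?_
  have hcm : Multiset.count b (distSpec (⊤ : SimpleGraph V))
      = (univ.filter (fun a => b = ev a)).card := by
    rw [distSpec, Multiset.count_map]
    rfl
  by_cases hb1 : b = (n : ℝ) - 1
  · subst hb1
    rw [hcm]
    have hfilter : univ.filter (fun a => (n : ℝ) - 1 = ev a) = T := by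
      apply Finset.filter_congr
      intro i _
      simp [eq_comm]
    rw [hfilter, hTcard, Multiset.count_cons_self, Multiset.count_replicate,
      if_neg (fun h => hne2 h.symm)]
  · by_cases hb2 : b = -1
    · subst hb2
      rw [hcm]
      have hfilter : univ.filter (fun a => (-1 : ℝ) = ev a)
          = univ.filter (fun i => ¬ ev i = (n : ℝ) - 1) := by
        apply Finset.filter_congr
        intro i _
        rcases hdich i with h | h
        · rw [h]
          exact ⟨fun _ hh => hne2 hh.symm, fun _ => rfl⟩
        · rw [h]
          exact ⟨fun hb => absurd hb.symm hne2, fun hnn => absurd rfl hnn⟩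
      rw [hfilter]
      have hcards : T.card + (univ.filter (fun i => ¬ ev i = (n : ℝ) - 1)).card = n := by
        rw [hT]; rw [Finset.card_filter_add_card_filter_not]; rfl
      rw [Multiset.count_cons_of_ne (fun h => hne2 h.symm), Multiset.count_replicate_self]
      omega
    · rw [hcm]
      have hfilter : univ.filter (fun a => b = ev a) = ∅ := by
        apply Finset.filter_false_of_mem
        intro i _
        rcases hdich i with h | h <;> rw [h] <;> intro hh
        · exact hb2 hh
        · exact hb1 hh
      rw [hfilter, Finset.card_empty, Multiset.count_cons_of_ne hb1,
        Multiset.count_replicate, if_neg (fun h => hb2 h.symm)]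

lemma sort_distSpec_top (hn : 2 ≤ Fintype.card V) :
    ((distSpec (⊤ : SimpleGraph V)).sort (· ≤ ·)).reverse
      = ((Fintype.card V : ℝ) - 1) :: List.replicate (Fintype.card V - 1) (-1) := by
  set n := Fintype.card V with hn'
  have hn2 : (2:ℝ) ≤ (n:ℝ) := by exact_mod_cast hn
  have hsorted_cand : (List.replicate (n-1) (-1:ℝ) ++ [(n:ℝ)-1]).Pairwise (· ≤ ·) := by
    rw [List.pairwise_append]
    refine ⟨?_, List.pairwise_singleton _ _, ?_⟩
    · exact List.pairwise_replicate.mpr (Or.inr (le_refl (-1:ℝ)))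
    · intro a ha b hb
      rw [List.eq_of_mem_replicate ha, List.mem_singleton.mp hb]
      linarith
  have hcoe : (((distSpec (⊤ : SimpleGraph V)).sort (· ≤ ·) : List ℝ) : Multiset ℝ)
      = ((List.replicate (n-1) (-1:ℝ) ++ [(n:ℝ)-1] : List ℝ) : Multiset ℝ) := by
    rw [Multiset.sort_eq, distSpec_top hn, ← Multiset.coe_add, Multiset.coe_replicate,
      Multiset.coe_singleton, add_comm, Multiset.singleton_add]
  have heq := List.Perm.eq_of_pairwise'
    (Multiset.pairwise_sort _ _) hsorted_cand (Multiset.coe_eq_coe.mp hcoe)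
  rw [heq, List.reverse_append, List.reverse_replicate]
  rfl

lemma exists_dist_two (G : SimpleGraph V) (hconn : G.Connected) (hG : G ≠ ⊤) :
    ∃ u w v : V, G.dist u w = 1 ∧ G.dist w v = 1 ∧ G.dist u v = 2 := by
  have hab : ∃ a b : V, a ≠ b ∧ ¬ G.Adj a b := by
    by_contra h
    push_neg at h
    apply hG
    ext x y
    simp only [SimpleGraph.top_adj]
    exact ⟨fun h' => h'.ne, fun hne => h x y hne⟩
  obtain ⟨a, b, hne, hnadj⟩ := hab
  have hpos := hconn.pos_dist_of_ne hne
  have h1 : G.dist a b ≠ 1 := fun h => hnadj (SimpleGraph.dist_eq_one_iff_adj.mp h)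
  have h2 : 2 ≤ G.dist a b := by omega
  obtain ⟨p, hp⟩ := hconn.exists_walk_length_eq_dist a b
  have hstep : ∀ i, G.dist a (p.getVert (i+1)) ≤ G.dist a (p.getVert i) + 1 := by
    intro i
    by_cases hi : i < p.length
    · have hadj := p.adj_getVert_succ hi
      have hd1 : G.dist (p.getVert i) (p.getVert (i+1)) = 1 :=
        SimpleGraph.dist_eq_one_iff_adj.mpr hadj
      have := hconn.dist_triangle (u := a) (v := p.getVert i) (w := p.getVert (i+1))
      omega
    · rw [p.getVert_of_length_le (le_of_not_gt hi),
        p.getVert_of_length_le (by omega : p.length ≤ i + 1)]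
      omega
  have hiv : ∃ i, G.dist a (p.getVert i) = 2 := by
    by_contra hno
    push_neg at hno
    have hle : ∀ i, G.dist a (p.getVert i) ≤ 1 := by
      intro i
      induction i with
      | zero => rw [p.getVert_zero]; simp [SimpleGraph.dist_self]
      | succ k ih =>
        have := hstep k
        have := hno (k + 1)
        omega
    have hfin := hle p.length
    rw [p.getVert_length] at hfin
    omega
  obtain ⟨i, hi⟩ := hiv
  obtain ⟨q, hq⟩ := (hconn a (p.getVert i)).exists_walk_length_eq_dist
  rw [hi] at hq
  refine ⟨a, q.getVert 1, p.getVert i, ?_, ?_, hi⟩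
  · apply SimpleGraph.dist_eq_one_iff_adj.mpr
    have := q.adj_getVert_succ (by omega : 0 < q.length)
    rwa [q.getVert_zero] at this
  · apply SimpleGraph.dist_eq_one_iff_adj.mpr
    have := q.adj_getVert_succ (by omega : 1 < q.length)
    have h2q : q.getVert 2 = p.getVert i := by
      rw [show (2 : ℕ) = q.length by omega, q.getVert_length]
    rwa [h2q] at this

lemma dot3 (A : Matrix V V ℝ) (u w v : V) (p q : ℝ) :
    (p • (Pi.single u 1 : V → ℝ) + q • (Pi.single w 1 : V → ℝ) + p • (Pi.single v 1 : V → ℝ)) ⬝ᵥ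
      A *ᵥ (p • (Pi.single u 1 : V → ℝ) + q • (Pi.single w 1 : V → ℝ) + p • (Pi.single v 1 : V → ℝ))
    = p*p*A u u + p*q*A u w + p*p*A u v + q*p*A w u + q*q*A w w + q*p*A w v
      + p*p*A v u + p*q*A v w + p*p*A v v := by
  simp only [Matrix.mulVec_add, Matrix.mulVec_smul, Matrix.mulVec_single_one, Matrix.col_apply,
    dotProduct_add, dotProduct_smul, add_dotProduct,
    smul_dotProduct, single_dotProduct, smul_eq_mul, Pi.add_apply,
    Pi.smul_apply, mul_one]
  ring

lemma mulVec3 (U : Matrix V V ℝ) (u w v : V) (p q : ℝ) (i0 : V) :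
    (U *ᵥ (p • (Pi.single u 1 : V → ℝ) + q • (Pi.single w 1 : V → ℝ) + p • (Pi.single v 1 : V → ℝ))) i0
    = p * U i0 u + q * U i0 w + p * U i0 v := by
  simp only [Matrix.mulVec_add, Matrix.mulVec_smul, Matrix.mulVec_single_one, Matrix.col_apply,
    Pi.add_apply,
    Pi.smul_apply, smul_eq_mul, mul_one]

lemma exists_big_eigenvalue (G : SimpleGraph V) (hn : 2 ≤ Fintype.card V) (hconn : G.Connected)
    (hG : G ≠ ⊤) :
    ∃ i, (Fintype.card V : ℝ) - 1 < (distMatrix_isHermitian G).eigenvalues i := by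
  classical
  set n := Fintype.card V with hnn
  by_contra hcon
  push_neg at hcon
  set hA := distMatrix_isHermitian G with hhA
  set x : V → ℝ := fun _ => 1 with hx
  have h1 := rayleigh_repr hA x
  have h2 := norm_repr hA x
  set y := ((hA.eigenvectorUnitary : Matrix V V ℝ))ᵀ *ᵥ x with hy
  have hxx : ∑ i, (x i)^2 = (n : ℝ) := by simp [hx, hnn]
  have hub : x ⬝ᵥ distMatrix G *ᵥ x ≤ (n:ℝ) * ((n:ℝ)-1) := by
    rw [h1]
    calc ∑ i, hA.eigenvalues i * (y i)^2 ≤ ∑ i, ((n:ℝ)-1) * (y i)^2 :=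
          Finset.sum_le_sum fun i _ => mul_le_mul_of_nonneg_right (hcon i) (sq_nonneg _)
      _ = ((n:ℝ)-1) * ∑ i, (y i)^2 := by rw [Finset.mul_sum]
      _ = (n:ℝ) * ((n:ℝ)-1) := by rw [h2, hxx]; ring
  obtain ⟨u, w, v, huw, hwv, huv⟩ := exists_dist_two G hconn hG
  have hlow : (n:ℝ) * ((n:ℝ)-1) < x ⬝ᵥ distMatrix G *ᵥ x := by
    have hdot : x ⬝ᵥ distMatrix G *ᵥ x = ∑ j, ∑ k, distMatrix G j k := by
      simp [dotProduct, Matrix.mulVec, hx]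
    have hpt : ∀ j k : V, (if j = k then (0:ℝ) else 1) ≤ distMatrix G j k := by
      intro j k
      by_cases h : j = k
      · simp [h, distMatrix, SimpleGraph.dist_self]
      · have hd : 1 ≤ G.dist j k := hconn.pos_dist_of_ne h
        rw [if_neg h]
        show (1:ℝ) ≤ (G.dist j k : ℝ)
        exact_mod_cast hd
    have hrow_le : ∀ j, (∑ k, (if j = k then (0:ℝ) else 1)) ≤ ∑ k, distMatrix G j k :=
      fun j => Finset.sum_le_sum fun k _ => hpt j k
    have huvne : u ≠ v := by
      intro h; rw [h] at huv; simp [SimpleGraph.dist_self] at huv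
    have hrow_u : (∑ k, (if u = k then (0:ℝ) else 1)) < ∑ k, distMatrix G u k := by
      refine Finset.sum_lt_sum (fun k _ => hpt u k) ⟨v, Finset.mem_univ v, ?_⟩
      rw [if_neg huvne]
      show (1:ℝ) < (G.dist u v : ℝ)
      rw [huv]; norm_num
    have hsum_c : ∑ j : V, ∑ k : V, (if j = k then (0:ℝ) else 1) = (n:ℝ) * ((n:ℝ)-1) := by
      have hrow : ∀ j : V, ∑ k, (if j = k then (0:ℝ) else 1) = (n:ℝ) - 1 := by
        intro j
        have hstep : ∑ k, (if j = k then (0:ℝ) else 1)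
            = ∑ k, ((1:ℝ) - if j = k then (1:ℝ) else 0) := by
          refine Finset.sum_congr rfl fun k _ => ?_
          by_cases h : j = k <;> simp [h]
        rw [hstep, Finset.sum_sub_distrib, Finset.sum_ite_eq univ j (fun _ => (1:ℝ)),
          if_pos (mem_univ j)]
        simp [hnn]
      rw [Finset.sum_congr rfl fun j _ => hrow j, Finset.sum_const, Finset.card_univ,
        nsmul_eq_mul]
    rw [hdot, ← hsum_c]
    exact Finset.sum_lt_sum (fun j _ => hrow_le j) ⟨u, Finset.mem_univ u, hrow_u⟩
  linarith

set_option maxHeartbeats 1000000 in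
lemma two_eigs (G : SimpleGraph V) (hn : 2 ≤ Fintype.card V) (hconn : G.Connected)
    (hG : G ≠ ⊤) :
    ∃ i j : V, i ≠ j ∧ 1 - Real.sqrt 3 ≤ (distMatrix_isHermitian G).eigenvalues i ∧
      1 - Real.sqrt 3 ≤ (distMatrix_isHermitian G).eigenvalues j := by
  classical
  set hA := distMatrix_isHermitian G with hhA
  set ev := hA.eigenvalues with hev
  set c : ℝ := 1 - Real.sqrt 3 with hc
  by_contra hcon
  push_neg at hcon
  have hone : ∃ i0 : V, ∀ i, i ≠ i0 → ev i < c := by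
    by_cases hex : ∃ i0, c ≤ ev i0
    · obtain ⟨i0, hi0⟩ := hex
      exact ⟨i0, fun i hi => hcon i0 i (fun h => hi h.symm) hi0⟩
    · push_neg at hex
      have hne : Nonempty V := Fintype.card_pos_iff.mp (by omega)
      obtain ⟨i0⟩ := hne
      exact ⟨i0, fun i _ => hex i⟩
  obtain ⟨i0, hi0⟩ := hone
  obtain ⟨u, w, v, huw, hwv, huv⟩ := exists_dist_two G hconn hG
  set U := (hA.eigenvectorUnitary : Matrix V V ℝ) with hU
  obtain ⟨p, q, hpq, hcons⟩ : ∃ p q : ℝ,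
      ¬(p = 0 ∧ q = 0) ∧ (Uᵀ i0 u + Uᵀ i0 v) * p + Uᵀ i0 w * q = 0 := by
    by_cases h : Uᵀ i0 u + Uᵀ i0 v = 0 ∧ Uᵀ i0 w = 0
    · exact ⟨1, 0, fun hh => one_ne_zero hh.1, by rw [h.1, h.2]; ring⟩
    · refine ⟨Uᵀ i0 w, -(Uᵀ i0 u + Uᵀ i0 v), ?_, by ring⟩
      rintro ⟨h1, h2⟩
      exact h ⟨neg_eq_zero.mp h2, h1⟩
  set x : V → ℝ := p • (Pi.single u 1 : V → ℝ) + q • (Pi.single w 1 : V → ℝ)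
      + p • (Pi.single v 1 : V → ℝ) with hx
  have hr1 := rayleigh_repr hA x
  have hr2 := norm_repr hA x
  set y := Uᵀ *ᵥ x with hy
  have hy0 : y i0 = 0 := by
    rw [hy, hx, mulVec3]
    linarith [hcons]
  -- distinctness
  have huwne : u ≠ w := by intro h; rw [h] at huw; simp [SimpleGraph.dist_self] at huw
  have hwvne : w ≠ v := by intro h; rw [h] at hwv; simp [SimpleGraph.dist_self] at hwv
  have huvne : u ≠ v := by intro h; rw [h] at huv; simp [SimpleGraph.dist_self] at huv
  -- entries
  have e_uu : distMatrix G u u = 0 := by simp [distMatrix, SimpleGraph.dist_self]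
  have e_ww : distMatrix G w w = 0 := by simp [distMatrix, SimpleGraph.dist_self]
  have e_vv : distMatrix G v v = 0 := by simp [distMatrix, SimpleGraph.dist_self]
  have e_uw : distMatrix G u w = 1 := by show ((G.dist u w : ℝ)) = 1; rw [huw]; norm_num
  have e_wu : distMatrix G w u = 1 := by
    show ((G.dist w u : ℝ)) = 1; rw [SimpleGraph.dist_comm, huw]; norm_num
  have e_wv : distMatrix G w v = 1 := by show ((G.dist w v : ℝ)) = 1; rw [hwv]; norm_num
  have e_vw : distMatrix G v w = 1 := by
    show ((G.dist v w : ℝ)) = 1; rw [SimpleGraph.dist_comm, hwv]; norm_num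
  have e_uv : distMatrix G u v = 2 := by show ((G.dist u v : ℝ)) = 2; rw [huv]; norm_num
  have e_vu : distMatrix G v u = 2 := by
    show ((G.dist v u : ℝ)) = 2; rw [SimpleGraph.dist_comm, huv]; norm_num
  have hxval : x ⬝ᵥ distMatrix G *ᵥ x = 4*(p*p) + 4*(p*q) := by
    rw [hx, dot3, e_uu, e_ww, e_vv, e_uw, e_wu, e_wv, e_vw, e_uv, e_vu]
    ring
  have hxnorm : ∑ i, (x i)^2 = 2*(p*p) + q*q := by
    have hid : ∑ i, (x i)^2 = x ⬝ᵥ (1 : Matrix V V ℝ) *ᵥ x := by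
      rw [Matrix.one_mulVec]
      simp [dotProduct, pow_two]
    rw [hid, hx, dot3, Matrix.one_apply_eq, Matrix.one_apply_eq, Matrix.one_apply_eq,
      Matrix.one_apply_ne huwne, Matrix.one_apply_ne huwne.symm,
      Matrix.one_apply_ne hwvne, Matrix.one_apply_ne hwvne.symm,
      Matrix.one_apply_ne huvne, Matrix.one_apply_ne huvne.symm]
    ring
  have hform : c * (2*(p*p) + q*q) ≤ 4*(p*p) + 4*(p*q) := by
    have h3 : Real.sqrt 3 ^ 2 = 3 := Real.sq_sqrt (by norm_num)
    have hs1 : 1 ≤ Real.sqrt 3 := by nlinarith [Real.sqrt_nonneg 3]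
    rw [hc]
    nlinarith [mul_nonneg (sub_nonneg.mpr hs1) (sq_nonneg ((1 + Real.sqrt 3)*p + q))]
  by_cases hyz : ∀ j, j ≠ i0 → y j = 0
  · have hall : ∑ i, (y i)^2 = 0 := by
      refine Finset.sum_eq_zero fun i _ => ?_
      by_cases h : i = i0
      · rw [h, hy0]
        norm_num
      · rw [hyz i h]
        norm_num
    have hx0 : 2*(p*p) + q*q = 0 := by rw [← hxnorm, ← hr2]; exact hall
    exact hpq ⟨by nlinarith, by nlinarith⟩
  · push_neg at hyz
    obtain ⟨j, hjne, hjy⟩ := hyz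
    have hstrict : ∑ i, ev i * (y i)^2 < c * ∑ i, (y i)^2 := by
      rw [Finset.mul_sum]
      apply Finset.sum_lt_sum
      · intro i _
        by_cases h : i = i0
        · rw [h, hy0]; simp
        · exact mul_le_mul_of_nonneg_right (le_of_lt (hi0 i h)) (sq_nonneg _)
      · exact ⟨j, Finset.mem_univ j,
          mul_lt_mul_of_pos_right (hi0 j hjne) (pow_two_pos_of_ne_zero hjy)⟩
    rw [hr2, hxnorm] at hstrict
    rw [hxval] at hr1
    linarith [hform, hstrict, hr1.symm.le, hr1.le]

lemma getD_zero_ge (G : SimpleGraph V) (i : V) :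
    (distMatrix_isHermitian G).eigenvalues i
      ≤ (((distSpec G).sort (· ≤ ·)).reverse).getD 0 0 := by
  apply le_getD_zero (rev_sorted _)
  rw [List.mem_reverse]
  have hmem : (distMatrix_isHermitian G).eigenvalues i ∈ distSpec G :=
    Multiset.mem_map.mpr ⟨i, Finset.mem_val.mpr (Finset.mem_univ i), rfl⟩
  rwa [Multiset.mem_sort]

lemma getD_one_ge (G : SimpleGraph V) {c : ℝ} (i j : V) (hij : i ≠ j)
    (hi : c ≤ (distMatrix_isHermitian G).eigenvalues i)
    (hj : c ≤ (distMatrix_isHermitian G).eigenvalues j) :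
    c ≤ (((distSpec G).sort (· ≤ ·)).reverse).getD 1 0 := by
  classical
  apply le_getD_one (rev_sorted _)
  rw [List.countP_reverse]
  have h1 : List.countP (fun x => decide (c ≤ x)) ((distSpec G).sort (· ≤ ·))
      = Multiset.countP (fun x => c ≤ x) (distSpec G) := by
    rw [← Multiset.coe_countP, Multiset.sort_eq]
  rw [h1, distSpec, Multiset.countP_map]
  have hsub : ({i, j} : Finset V)
      ⊆ univ.filter (fun k => c ≤ (distMatrix_isHermitian G).eigenvalues k) := by
    intro k hk
    rcases Finset.mem_insert.mp hk with rfl | hk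
    · exact Finset.mem_filter.mpr ⟨Finset.mem_univ _, hi⟩
    · rw [Finset.mem_singleton.mp hk]
      exact Finset.mem_filter.mpr ⟨Finset.mem_univ _, hj⟩
  calc (2:ℕ) = ({i, j} : Finset V).card := (Finset.card_pair hij).symm
    _ ≤ (univ.filter (fun k => c ≤ (distMatrix_isHermitian G).eigenvalues k)).card :=
        Finset.card_le_card hsub
    _ ≤ Multiset.card
        (Multiset.filter ((fun x => c ≤ x) ∘ (distMatrix_isHermitian G).eigenvalues)
          univ.val) := by
        apply le_of_eq
        rw [Finset.card, Finset.filter_val]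
        congr 1

end Helpers

theorem dcube_stmt4 {V : Type*} [Fintype V] [DecidableEq V] (G : SimpleGraph V)
    (hn : 2 ≤ Fintype.card V) (hconn : G.Connected) (δ0 δ1 : ℝ)
    (hδ0 : δ0 = (((distSpec G).sort (· ≤ ·)).reverse).getD 0 0)
    (hδ1 : δ1 = (((distSpec G).sort (· ≤ ·)).reverse).getD 1 0) :
    (δ1 < 1 - Real.sqrt 3 ↔ δ1 = -1) ∧ (δ1 = -1 ↔ G = ⊤) ∧
      (G = ⊤ ↔ δ0 = (Fintype.card V : ℝ) - 1) := by
  have hs3 : Real.sqrt 3 ^ 2 = 3 := Real.sq_sqrt (by norm_num)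
  have hs3a : 1 ≤ Real.sqrt 3 := by nlinarith [Real.sqrt_nonneg 3]
  have hs3b : Real.sqrt 3 < 2 := by nlinarith [Real.sqrt_nonneg 3]
  by_cases hG : G = ⊤
  · subst hG
    rw [sort_distSpec_top hn] at hδ0 hδ1
    have hδ0v : δ0 = (Fintype.card V : ℝ) - 1 := by
      rw [hδ0, List.getD_cons_zero]
    have hδ1v : δ1 = -1 := by
      rw [hδ1, List.getD_cons_succ]
      obtain ⟨m, hm⟩ : ∃ m, Fintype.card V - 1 = m + 1 := ⟨Fintype.card V - 2, by omega⟩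
      rw [hm, List.replicate_succ, List.getD_cons_zero]
    refine ⟨⟨fun _ => hδ1v, fun h => by rw [h]; linarith⟩, ?_, ?_⟩
    · exact ⟨fun _ => rfl, fun _ => hδ1v⟩
    · exact ⟨fun _ => hδ0v, fun _ => rfl⟩
  · obtain ⟨i, j, hij, hi, hj⟩ := two_eigs G hn hconn hG
    have hδ1b : 1 - Real.sqrt 3 ≤ δ1 := hδ1 ▸ getD_one_ge G i j hij hi hj
    obtain ⟨i0, hbig⟩ := exists_big_eigenvalue G hn hconn hG
    have hδ0b : (Fintype.card V : ℝ) - 1 < δ0 := lt_of_lt_of_le hbig (hδ0 ▸ getD_zero_ge G i0)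
    refine ⟨⟨fun h => absurd h (not_lt.mpr hδ1b), fun h => by rw [h] at hδ1b; linarith⟩,
      ⟨fun h => by rw [h] at hδ1b; linarith, fun h => absurd h hG⟩,
      ⟨fun h => absurd h hG, fun h => by rw [h] at hδ0b; linarith⟩⟩
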